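/- Let Σ' be a signature and C, E, S, X, Y, E' types; write U(Y) := Tree_{Σ'}(Y + E') and K(X) := C → Tree_{Σ'}(((X + E) × C) + S), and let φ : ((X + E) × C) + S → U(Y) be a finalisation map. If F : K(X) → (C → U(Y)) is any map satisfying the finalisation homomorphism equations — F(unit x) = fun c => φ(inl (inl x, c)); F(raise e) = fun c => φ(inl (inr e, c)); F(kill s) = fun _ => φ(inr s); F(getenv κ) = fun c => F(κ c) c; F(setenv(c', u)) = fun _ => F(u) c'; F(op_K(a, κ)) = fun c => op(a, fun b => F(κ b) c) for all operations op of Σ' — then F(u)(c) = φ†(u c) for all u ∈ K(X) and c ∈ C, where φ† is the Kleisli extension of φ in Tree_{Σ'}. Consequently (finalisation theorem), for every u ∈ K(X) and every initial state w ∈ C there exists a tree t ∈ Tree_{Σ'}(((X + E) × C) + S), namely t = u w, such that F(u)(w) = φ†(t); i.e., the result of running factors through the finalisation map φ. -/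

import Mathlib

/-- An algebraic signature: operation symbols with parameter and arity types. -/
structure Sig where
  Op : Type
  Par : Op → Type
  Ar : Op → Type

/-- Computation trees over a signature. -/
inductive CTree (σ : Sig) (X : Type) : Type
  | ret : X → CTree σ X
  | node : (op : σ.Op) → σ.Par op → (σ.Ar op → CTree σ X) → CTree σ X

/-- Kleisli extension `f†` of `f : X → CTree σ Y`. -/
def CTree.kext {σ : Sig} {X Y : Type} (f : X → CTree σ Y) : CTree σ X → CTree σ Y
  | .ret x => f x
  | .node op a κ => .node op a fun b => CTree.kext f (κ b)

/-- The kernel monad `K_{C,σ,E,S}(X) := C → Tree_σ(((X + E) × C) + S)`. -/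
def KM (σ : Sig) (C E S X : Type) : Type :=
  C → CTree σ (((X ⊕ E) × C) ⊕ S)

/-- Unit of the kernel monad. -/
def KM.unit {σ : Sig} {C E S X : Type} (x : X) : KM σ C E S X :=
  fun c => CTree.ret (Sum.inl (Sum.inl x, c))

/-- Bind of the kernel monad. -/
def KM.bind {σ : Sig} {C E S X Y : Type} (f : X → KM σ C E S Y)
    (u : KM σ C E S X) : KM σ C E S Y :=
  fun c => CTree.kext (fun z => match z with
    | Sum.inl (Sum.inl x, c') => f x c'
    | Sum.inl (Sum.inr e, c') => CTree.ret (Sum.inl (Sum.inr e, c'))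
    | Sum.inr s => CTree.ret (Sum.inr s)) (u c)

/-- Generic effect: read the kernel state. -/
def KM.getenv {σ : Sig} {C E S X : Type} (κ : C → KM σ C E S X) : KM σ C E S X :=
  fun c => κ c c

/-- Generic effect: set the kernel state. -/
def KM.setenv {σ : Sig} {C E S X : Type} (c' : C) (u : KM σ C E S X) : KM σ C E S X :=
  fun _ => u c'

/-- Generic effect: raise an exception. -/
def KM.raise {σ : Sig} {C E S X : Type} (e : E) : KM σ C E S X :=
  fun c => CTree.ret (Sum.inl (Sum.inr e, c))

/-- Generic effect: send a signal. -/
def KM.kill {σ : Sig} {C E S X : Type} (s : S) : KM σ C E S X :=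
  fun _ => CTree.ret (Sum.inr s)

/-- Algebraic operations lifted to the kernel monad. -/
def KM.op {σ : Sig} {C E S X : Type} (op : σ.Op) (a : σ.Par op)
    (κ : σ.Ar op → KM σ C E S X) : KM σ C E S X :=
  fun c => CTree.node op a (fun b => κ b c)

/-- Uniqueness of the finalisation homomorphism and the finalisation theorem:
any map `F : K(X) → (C → U(Y))` satisfying the finalisation homomorphism
equations for a finalisation map `φ` is given by `F(u)(c) = φ†(u c)`;
consequently, running from any initial state `w` factors through the
finalisation map `φ`, via the tree `t = u w`. -/
theorem finalisation_theorem (σ' : Sig) (C E S X Y E' : Type)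
    (φ : ((X ⊕ E) × C) ⊕ S → CTree σ' (Y ⊕ E'))
    (F : KM σ' C E S X → C → CTree σ' (Y ⊕ E'))
    (hunit : ∀ x : X, F (KM.unit x) = fun c => φ (Sum.inl (Sum.inl x, c)))
    (hraise : ∀ e : E, F (KM.raise e) = fun c => φ (Sum.inl (Sum.inr e, c)))
    (hkill : ∀ s : S, F (KM.kill s) = fun _ => φ (Sum.inr s))
    (hget : ∀ κ : C → KM σ' C E S X, F (KM.getenv κ) = fun c => F (κ c) c)
    (hset : ∀ (c' : C) (u : KM σ' C E S X), F (KM.setenv c' u) = fun _ => F u c')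
    (hop : ∀ (op : σ'.Op) (a : σ'.Par op) (κ : σ'.Ar op → KM σ' C E S X),
      F (KM.op op a κ) = fun c => CTree.node op a (fun b => F (κ b) c)) :
    (∀ (u : KM σ' C E S X) (c : C), F u c = CTree.kext φ (u c)) ∧
    (∀ (u : KM σ' C E S X) (w : C),
      ∃ t : CTree σ' (((X ⊕ E) × C) ⊕ S), t = u w ∧ F u w = CTree.kext φ t) := by

  have key : ∀ (t : CTree σ' (((X ⊕ E) × C) ⊕ S)) (c : C),
      F (fun _ => t) c = CTree.kext φ t := by
    intro t
    induction t with
    | ret z =>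
      intro c
      match z with
      | Sum.inl (Sum.inl x, c') =>
        have : (fun _ => CTree.ret (σ := σ') (Sum.inl (Sum.inl x, c'))) =
            KM.setenv c' (KM.unit (σ := σ') (C := C) (E := E) (S := S) x) := rfl
        rw [this, hset, hunit]; rfl
      | Sum.inl (Sum.inr e, c') =>
        have : (fun _ => CTree.ret (σ := σ') (Sum.inl (Sum.inr e, c'))) =
            KM.setenv c' (KM.raise (σ := σ') (C := C) (X := X) (S := S) e) := rfl
        rw [this, hset, hraise]; rfl
      | Sum.inr s =>
        have : (fun _ => CTree.ret (σ := σ') (Sum.inr s)) =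
            KM.kill (σ := σ') (C := C) (X := X) (E := E) s := rfl
        rw [this, hkill]; rfl
    | node op a κ ih =>
      intro c
      have : (fun _ => CTree.node op a κ) = KM.op op a (fun b _ => κ b) := rfl
      erw [this, hop]
      simp only [CTree.kext]
      exact congrArg _ (funext fun b => ih b c)
  have main : ∀ (u : KM σ' C E S X) (c : C), F u c = CTree.kext φ (u c) := by
    intro u c
    have h1 : F (KM.setenv c u) = fun _ => F u c := hset c u
    have h2 : F (fun _ => u c) c = CTree.kext φ (u c) := key (u c) c
    have h3 : KM.setenv c u = (fun _ => u c) := rfl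
    rw [h3] at h1
    rw [h1] at h2
    exact h2.symm ▸ h2
  exact ⟨main, fun u w => ⟨u w, rfl, main u w⟩⟩
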